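/- Let γ be the Gaussian measure, m(x) = min(1,1/|x|), τ̄ > 0, and suppose u ∈ L¹(R^n, dx) with |u| integrable. Then ∫_{R^n} m(x)^{-n} ∫_{B(x, τ̄ m(x))} |u(w)| dw dγ(x) ≤ C‖u·e^{-|·|²}‖_{L¹(dx)} for a constant C depending only on n and τ̄. -/

import Mathlib

open MeasureTheory
open scoped ENNReal

open Classical in
noncomputable def madm {n : ℕ} (x : EuclideanSpace ℝ (Fin n)) : ℝ :=
  if x = 0 then 1 else min 1 ‖x‖⁻¹

noncomputable def gaussMeasure (n : ℕ) : Measure (EuclideanSpace ℝ (Fin n)) :=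
  volume.withDensity (fun x => ENNReal.ofReal (Real.pi ^ (-(n : ℝ) / 2) * Real.exp (-‖x‖ ^ 2)))


lemma madm_pos {n : ℕ} (x : EuclideanSpace ℝ (Fin n)) : 0 < madm x := by
  unfold madm; split
  · norm_num
  · exact lt_min one_pos (inv_pos.2 (norm_pos_iff.2 (by assumption)))

lemma madm_le_one {n : ℕ} (x : EuclideanSpace ℝ (Fin n)) : madm x ≤ 1 := by
  unfold madm; split
  · exact le_refl 1
  · exact min_le_left _ _

lemma madm_mul_norm_le {n : ℕ} (x : EuclideanSpace ℝ (Fin n)) : madm x * ‖x‖ ≤ 1 := by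
  unfold madm; split
  · simp [*]
  · calc min 1 ‖x‖⁻¹ * ‖x‖ ≤ ‖x‖⁻¹ * ‖x‖ :=
        mul_le_mul_of_nonneg_right (min_le_right _ _) (norm_nonneg x)
    _ = 1 := inv_mul_cancel₀ (norm_ne_zero_iff.2 (by assumption))

lemma madm_comp {n : ℕ} {τ : ℝ} (hτ : 0 < τ) {a b : EuclideanSpace ℝ (Fin n)}
    (h : ‖a‖ ≤ ‖b‖ + τ) : madm b ≤ (1 + τ) * madm a := by
  by_cases ha : a = 0
  · have : madm a = 1 := by simp [madm, ha]
    rw [this]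
    calc madm b ≤ 1 := madm_le_one b
    _ ≤ (1+τ) * 1 := by nlinarith
  · have hma : madm a = min 1 ‖a‖⁻¹ := by simp [madm, ha]
    have hb' : 0 < ‖b‖ + τ := by positivity
    have ha' : (‖b‖ + τ)⁻¹ ≤ ‖a‖⁻¹ := by
      apply inv_anti₀ (norm_pos_iff.2 ha) h
    have hmin : min 1 (‖b‖ + τ)⁻¹ ≤ madm a := by
      rw [hma]; exact min_le_min le_rfl ha'
    rcases le_total ‖b‖ 1 with hb | hb
    · have h1 : (1+τ)⁻¹ ≤ (‖b‖+τ)⁻¹ := inv_anti₀ hb' (by linarith)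
      have h2 : (1+τ)⁻¹ ≤ madm a := le_trans (le_min (by
        rw [inv_le_one_iff₀]; right; linarith) h1) hmin
      calc madm b ≤ 1 := madm_le_one b
      _ = (1+τ) * (1+τ)⁻¹ := by field_simp
      _ ≤ (1+τ) * madm a := by nlinarith
    · have hbne : b ≠ 0 := by intro hb0; rw [hb0] at hb; simp at hb; linarith
      have hmb : madm b ≤ ‖b‖⁻¹ := by
        simp only [madm, if_neg hbne]; exact min_le_right _ _
      have h1 : (‖b‖+τ)⁻¹ ≤ 1 := by rw [inv_le_one_iff₀]; right; linarith
      have h2 : (‖b‖+τ)⁻¹ ≤ madm a := le_trans (le_min h1 le_rfl |>.trans hmin) le_rfl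
      have hbpos : (0:ℝ) < ‖b‖ := by linarith
      have h3 : ‖b‖⁻¹ ≤ (1+τ) * (‖b‖+τ)⁻¹ := by
        rw [inv_eq_one_div, inv_eq_one_div, mul_one_div, div_le_div_iff₀ hbpos hb']
        nlinarith
      calc madm b ≤ ‖b‖⁻¹ := hmb
      _ ≤ (1+τ) * (‖b‖+τ)⁻¹ := h3
      _ ≤ (1+τ) * madm a := by nlinarith

lemma measurable_madm {n : ℕ} : Measurable (madm (n := n)) := by
  unfold madm
  exact Measurable.ite (measurableSet_eq) measurable_const
    (measurable_const.min measurable_norm.inv)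

lemma sq_norm_bound {n : ℕ} {τ : ℝ} (hτ : 0 < τ) {x w : EuclideanSpace ℝ (Fin n)}
    (hd : dist w x < τ * madm x) : ‖w‖ ^ 2 ≤ ‖x‖ ^ 2 + (2 * τ + τ ^ 2) := by
  have h1 : ‖w‖ ≤ ‖x‖ + dist w x := by
    calc ‖w‖ = dist w 0 := (dist_zero_right w).symm
    _ ≤ dist w x + dist x 0 := dist_triangle w x 0
    _ = ‖x‖ + dist w x := by rw [dist_zero_right]; ring
  have h2 : ‖x‖ * dist w x ≤ τ :=
    calc ‖x‖ * dist w x ≤ ‖x‖ * (τ * madm x) :=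
          mul_le_mul_of_nonneg_left hd.le (norm_nonneg x)
    _ = τ * (madm x * ‖x‖) := by ring
    _ ≤ τ * 1 := mul_le_mul_of_nonneg_left (madm_mul_norm_le x) hτ.le
    _ = τ := mul_one τ
  have h3 : dist w x ≤ τ := hd.le.trans (by nlinarith [madm_le_one x])
  have h4 := mul_self_le_mul_self (norm_nonneg w) h1
  nlinarith [dist_nonneg (x := w) (y := x)]

lemma vol_ball_le (n : ℕ) (w : EuclideanSpace ℝ (Fin n)) {r : ℝ} (hr : 0 < r) :
    volume (Metric.ball w r) ≤
      ENNReal.ofReal (r ^ n) * volume (Metric.ball (0 : EuclideanSpace ℝ (Fin n)) 1) := by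
  rcases Nat.eq_zero_or_pos n with hn | hn
  · subst hn
    have hs : ∀ y z : EuclideanSpace ℝ (Fin 0), y = z := fun y z => Subsingleton.elim y z
    have h1 : Metric.ball w r = Set.univ := by
      ext y; simp [Metric.mem_ball, hs y w, hr]
    have h2 : Metric.ball (0 : EuclideanSpace ℝ (Fin 0)) 1 = Set.univ := by
      ext y; simp [Metric.mem_ball, hs y 0]
    simp [h1, h2]
  · haveI : Nontrivial (EuclideanSpace ℝ (Fin n)) :=
      Module.nontrivial_of_finrank_pos (R := ℝ) (by rw [finrank_euclideanSpace_fin]; exact hn)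
    rw [Measure.addHaar_ball volume w hr.le, finrank_euclideanSpace_fin]

noncomputable def kerf (n : ℕ) (τ : ℝ) (u : EuclideanSpace ℝ (Fin n) → ℝ)
    (x w : EuclideanSpace ℝ (Fin n)) : ℝ≥0∞ :=
  ENNReal.ofReal (Real.pi ^ (-(n : ℝ) / 2) * Real.exp (-‖x‖ ^ 2) * (madm x)⁻¹ ^ n) *
    ({p : EuclideanSpace ℝ (Fin n) × EuclideanSpace ℝ (Fin n) |
        dist p.2 p.1 < τ * madm p.1}.indicator (fun p => ENNReal.ofReal |u p.2|) (x, w))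

lemma kerf_eq (n : ℕ) (τ : ℝ) {u : EuclideanSpace ℝ (Fin n) → ℝ} (hu : Integrable u)
    (x : EuclideanSpace ℝ (Fin n)) :
    ENNReal.ofReal (Real.pi ^ (-(n : ℝ) / 2) * Real.exp (-‖x‖ ^ 2)) *
      ENNReal.ofReal ((madm x)⁻¹ ^ n * ∫ w in Metric.ball x (τ * madm x), |u w|) =
    ∫⁻ w, kerf n τ u x w := by
  have hπ : (0:ℝ) ≤ Real.pi ^ (-(n : ℝ) / 2) := Real.rpow_nonneg Real.pi_pos.le _
  have hginn : (0:ℝ) ≤ (madm x)⁻¹ ^ n := pow_nonneg (inv_nonneg.2 (madm_pos x).le) n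
  have hint : ENNReal.ofReal (∫ w in Metric.ball x (τ * madm x), |u w|) =
      ∫⁻ w in Metric.ball x (τ * madm x), ENNReal.ofReal |u w| :=
    ofReal_integral_eq_lintegral_ofReal hu.abs.integrableOn
      (Filter.Eventually.of_forall fun w => abs_nonneg _)
  have hind : ∀ w, ({p : EuclideanSpace ℝ (Fin n) × EuclideanSpace ℝ (Fin n) |
      dist p.2 p.1 < τ * madm p.1}.indicator (fun p => ENNReal.ofReal |u p.2|) (x, w)) =
      (Metric.ball x (τ * madm x)).indicator (fun w => ENNReal.ofReal |u w|) w := by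
    intro w
    by_cases hw : dist w x < τ * madm x
    · rw [Set.indicator_of_mem (show (x, w) ∈ _ from hw),
        Set.indicator_of_mem (Metric.mem_ball.2 hw)]
    · rw [Set.indicator_of_notMem (show (x, w) ∉ _ from hw),
        Set.indicator_of_notMem (fun hc => hw (Metric.mem_ball.1 hc))]
  calc ENNReal.ofReal (Real.pi ^ (-(n : ℝ) / 2) * Real.exp (-‖x‖ ^ 2)) *
      ENNReal.ofReal ((madm x)⁻¹ ^ n * ∫ w in Metric.ball x (τ * madm x), |u w|)
      = ENNReal.ofReal (Real.pi ^ (-(n : ℝ) / 2) * Real.exp (-‖x‖ ^ 2) * (madm x)⁻¹ ^ n) *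
        ∫⁻ w in Metric.ball x (τ * madm x), ENNReal.ofReal |u w| := by
        rw [ENNReal.ofReal_mul hginn, hint, ← mul_assoc,
          ← ENNReal.ofReal_mul (mul_nonneg hπ (Real.exp_nonneg _))]
    _ = ENNReal.ofReal (Real.pi ^ (-(n : ℝ) / 2) * Real.exp (-‖x‖ ^ 2) * (madm x)⁻¹ ^ n) *
        ∫⁻ w, (Metric.ball x (τ * madm x)).indicator (fun w => ENNReal.ofReal |u w|) w := by
        rw [lintegral_indicator measurableSet_ball]
    _ = ∫⁻ w, kerf n τ u x w := by
        rw [← lintegral_const_mul' _ _ ENNReal.ofReal_ne_top]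
        refine lintegral_congr fun w => ?_
        simp only [kerf]
        rw [hind w]

lemma kerf_meas (n : ℕ) (τ : ℝ) {u : EuclideanSpace ℝ (Fin n) → ℝ}
    (hu : AEStronglyMeasurable u volume) :
    AEMeasurable (Function.uncurry (kerf n τ u)) (volume.prod volume) := by
  have h1 : Measurable fun x : EuclideanSpace ℝ (Fin n) =>
      Real.pi ^ (-(n : ℝ) / 2) * Real.exp (-‖x‖ ^ 2) * (madm x)⁻¹ ^ n :=
    ((continuous_const.mul (Real.continuous_exp.comp
      ((continuous_norm.pow 2).neg))).measurable).mul ((measurable_madm.inv).pow_const n)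
  have hS : MeasurableSet {p : EuclideanSpace ℝ (Fin n) × EuclideanSpace ℝ (Fin n) |
      dist p.2 p.1 < τ * madm p.1} :=
    measurableSet_lt (continuous_dist.comp (continuous_snd.prodMk continuous_fst)).measurable
      ((measurable_madm.comp measurable_fst).const_mul τ)
  have h2 : AEMeasurable (fun p : EuclideanSpace ℝ (Fin n) × EuclideanSpace ℝ (Fin n) =>
      ENNReal.ofReal |u p.2|) (volume.prod volume) := by
    have hb : AEMeasurable (fun w => ENNReal.ofReal |u w|) volume :=
      ENNReal.measurable_ofReal.comp_aemeasurable
        (continuous_abs.measurable.comp_aemeasurable hu.aemeasurable)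
    exact hb.comp_quasiMeasurePreserving Measure.quasiMeasurePreserving_snd
  exact ((ENNReal.measurable_ofReal.comp (h1.comp measurable_fst)).aemeasurable).mul
    (h2.indicator hS)

lemma kerf_bound (n : ℕ) {τ : ℝ} (hτ : 0 < τ) (u : EuclideanSpace ℝ (Fin n) → ℝ)
    (w : EuclideanSpace ℝ (Fin n)) :
    ∫⁻ x, kerf n τ u x w ≤
      ENNReal.ofReal (Real.pi ^ (-(n : ℝ) / 2) * Real.exp (2 * τ + τ ^ 2) * (1 + τ) ^ n *
          (τ * (1 + τ)) ^ n) *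
        volume (Metric.ball (0 : EuclideanSpace ℝ (Fin n)) 1) *
        ENNReal.ofReal (|u w| * Real.exp (-‖w‖ ^ 2)) := by
  have hπ : (0:ℝ) ≤ Real.pi ^ (-(n : ℝ) / 2) := Real.rpow_nonneg Real.pi_pos.le _
  have hmw := madm_pos w
  set c₂ : ℝ := Real.pi ^ (-(n : ℝ) / 2) * Real.exp (2 * τ + τ ^ 2) * Real.exp (-‖w‖ ^ 2) *
      ((1 + τ) * (madm w)⁻¹) ^ n * |u w| with hc₂def
  have hc₂0 : 0 ≤ c₂ := by
    refine mul_nonneg (mul_nonneg (mul_nonneg (mul_nonneg hπ (Real.exp_nonneg _))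
      (Real.exp_nonneg _)) (pow_nonneg ?_ n)) (abs_nonneg _)
    exact mul_nonneg (by linarith) (inv_nonneg.2 hmw.le)
  have hR : 0 < τ * ((1 + τ) * madm w) := mul_pos hτ (mul_pos (by linarith) hmw)
  have hpt : ∀ x, kerf n τ u x w ≤
      (Metric.ball w (τ * ((1 + τ) * madm w))).indicator (fun _ => ENNReal.ofReal c₂) x := by
    intro x
    by_cases hx : dist w x < τ * madm x
    · have hmxp := madm_pos x
      have hdx : dist w x ≤ τ := hx.le.trans (by nlinarith [madm_le_one x])
      have hxw : ‖x‖ ≤ ‖w‖ + τ := by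
        calc ‖x‖ = dist x 0 := (dist_zero_right x).symm
        _ ≤ dist x w + dist w 0 := dist_triangle x w 0
        _ = ‖w‖ + dist w x := by rw [dist_zero_right, dist_comm]; ring
        _ ≤ ‖w‖ + τ := by linarith
      have hwx : ‖w‖ ≤ ‖x‖ + τ := by
        calc ‖w‖ = dist w 0 := (dist_zero_right w).symm
        _ ≤ dist w x + dist x 0 := dist_triangle w x 0
        _ = ‖x‖ + dist w x := by rw [dist_zero_right]; ring
        _ ≤ ‖x‖ + τ := by linarith
      have hmx : madm x ≤ (1 + τ) * madm w := madm_comp hτ hwx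
      have hmw2 : madm w ≤ (1 + τ) * madm x := madm_comp hτ hxw
      have hmem : x ∈ Metric.ball w (τ * ((1 + τ) * madm w)) := by
        rw [Metric.mem_ball, dist_comm]
        calc dist w x < τ * madm x := hx
        _ ≤ τ * ((1 + τ) * madm w) := mul_le_mul_of_nonneg_left hmx hτ.le
      simp only [kerf]
      rw [Set.indicator_of_mem (show (x, w) ∈ _ from hx), Set.indicator_of_mem hmem,
        ← ENNReal.ofReal_mul (mul_nonneg (mul_nonneg hπ (Real.exp_nonneg _))
          (pow_nonneg (inv_nonneg.2 hmxp.le) n))]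
      apply ENNReal.ofReal_le_ofReal
      have hsq := sq_norm_bound hτ hx
      have hexp : Real.exp (-‖x‖ ^ 2) ≤ Real.exp (2 * τ + τ ^ 2) * Real.exp (-‖w‖ ^ 2) := by
        rw [← Real.exp_add]; exact Real.exp_le_exp.2 (by linarith)
      have hinv : (madm x)⁻¹ ≤ (1 + τ) * (madm w)⁻¹ := by
        rw [inv_eq_one_div, inv_eq_one_div, mul_one_div, div_le_div_iff₀ hmxp hmw]
        nlinarith
      have hpow : (madm x)⁻¹ ^ n ≤ ((1 + τ) * (madm w)⁻¹) ^ n :=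
        pow_le_pow_left₀ (inv_nonneg.2 hmxp.le) hinv n
      calc Real.pi ^ (-(n : ℝ) / 2) * Real.exp (-‖x‖ ^ 2) * (madm x)⁻¹ ^ n * |u w|
          ≤ Real.pi ^ (-(n : ℝ) / 2) * (Real.exp (2 * τ + τ ^ 2) * Real.exp (-‖w‖ ^ 2)) *
            ((1 + τ) * (madm w)⁻¹) ^ n * |u w| := by
            refine mul_le_mul_of_nonneg_right ?_ (abs_nonneg _)
            exact mul_le_mul (mul_le_mul_of_nonneg_left hexp hπ) hpow
              (pow_nonneg (inv_nonneg.2 hmxp.le) n)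
              (mul_nonneg hπ (mul_nonneg (Real.exp_nonneg _) (Real.exp_nonneg _)))
        _ = c₂ := by rw [hc₂def]; ring
    · simp only [kerf]
      rw [Set.indicator_of_notMem (show (x, w) ∉ _ from hx), mul_zero]
      exact zero_le
  have hcomp : c₂ * (τ * ((1 + τ) * madm w)) ^ n =
      (Real.pi ^ (-(n : ℝ) / 2) * Real.exp (2 * τ + τ ^ 2) * (1 + τ) ^ n *
        (τ * (1 + τ)) ^ n) * (|u w| * Real.exp (-‖w‖ ^ 2)) := by
    have hx : ((1 + τ) * (madm w)⁻¹) ^ n * (τ * ((1 + τ) * madm w)) ^ n =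
        (1 + τ) ^ n * (τ * (1 + τ)) ^ n := by
      rw [← mul_pow, ← mul_pow]
      congr 1
      field_simp
    calc c₂ * (τ * ((1 + τ) * madm w)) ^ n
        = (Real.pi ^ (-(n : ℝ) / 2) * Real.exp (2 * τ + τ ^ 2) * Real.exp (-‖w‖ ^ 2) * |u w|) *
          (((1 + τ) * (madm w)⁻¹) ^ n * (τ * ((1 + τ) * madm w)) ^ n) := by
          rw [hc₂def]; ring
      _ = _ := by rw [hx]; ring
  calc ∫⁻ x, kerf n τ u x w
      ≤ ∫⁻ x, (Metric.ball w (τ * ((1 + τ) * madm w))).indicator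
          (fun _ => ENNReal.ofReal c₂) x := lintegral_mono hpt
    _ = ENNReal.ofReal c₂ * volume (Metric.ball w (τ * ((1 + τ) * madm w))) :=
        lintegral_indicator_const measurableSet_ball _
    _ ≤ ENNReal.ofReal c₂ * (ENNReal.ofReal ((τ * ((1 + τ) * madm w)) ^ n) *
          volume (Metric.ball (0 : EuclideanSpace ℝ (Fin n)) 1)) :=
        mul_le_mul_right (vol_ball_le n w hR) _
    _ = ENNReal.ofReal (c₂ * (τ * ((1 + τ) * madm w)) ^ n) *
          volume (Metric.ball (0 : EuclideanSpace ℝ (Fin n)) 1) := by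
        rw [← mul_assoc, ← ENNReal.ofReal_mul hc₂0]
    _ = _ := by
        rw [hcomp, ENNReal.ofReal_mul (by positivity)]
        ring

lemma key_lintegral (n : ℕ) {τ : ℝ} (hτ : 0 < τ) {u : EuclideanSpace ℝ (Fin n) → ℝ}
    (hu : Integrable u) :
    ∫⁻ x, ENNReal.ofReal ((madm x)⁻¹ ^ n * ∫ w in Metric.ball x (τ * madm x), |u w|)
        ∂(gaussMeasure n) ≤
      ENNReal.ofReal (Real.pi ^ (-(n : ℝ) / 2) * Real.exp (2 * τ + τ ^ 2) * (1 + τ) ^ n *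
          (τ * (1 + τ)) ^ n) *
        volume (Metric.ball (0 : EuclideanSpace ℝ (Fin n)) 1) *
        ENNReal.ofReal (∫ w, |u w| * Real.exp (-‖w‖ ^ 2)) := by
  have hgmeas : Measurable fun x : EuclideanSpace ℝ (Fin n) =>
      ENNReal.ofReal (Real.pi ^ (-(n : ℝ) / 2) * Real.exp (-‖x‖ ^ 2)) :=
    ENNReal.measurable_ofReal.comp
      (continuous_const.mul (Real.continuous_exp.comp ((continuous_norm.pow 2).neg))).measurable
  have hu2 : Integrable (fun w => |u w| * Real.exp (-‖w‖ ^ 2)) := by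
    have hcont : Continuous fun w : EuclideanSpace ℝ (Fin n) => Real.exp (-‖w‖ ^ 2) :=
      Real.continuous_exp.comp ((continuous_norm.pow 2).neg)
    have h := hu.abs.bdd_mul (c := 1) hcont.aestronglyMeasurable
      (Filter.Eventually.of_forall fun w => by
        rw [Real.norm_eq_abs, abs_of_nonneg (Real.exp_nonneg _)]
        exact Real.exp_le_one_iff.2 (neg_nonpos.2 (by positivity)))
    exact h.congr (Filter.Eventually.of_forall fun w => mul_comm _ _)
  rw [gaussMeasure, lintegral_withDensity_eq_lintegral_mul_non_measurable _ hgmeas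
    (Filter.Eventually.of_forall fun x => ENNReal.ofReal_lt_top)]
  simp only [Pi.mul_apply]
  calc ∫⁻ x, ENNReal.ofReal (Real.pi ^ (-(n : ℝ) / 2) * Real.exp (-‖x‖ ^ 2)) *
        ENNReal.ofReal ((madm x)⁻¹ ^ n * ∫ w in Metric.ball x (τ * madm x), |u w|)
      = ∫⁻ x, ∫⁻ w, kerf n τ u x w :=
        lintegral_congr fun x => kerf_eq n τ hu x
    _ = ∫⁻ w, ∫⁻ x, kerf n τ u x w := lintegral_lintegral_swap (kerf_meas n τ hu.1)
    _ ≤ ∫⁻ w, ENNReal.ofReal (Real.pi ^ (-(n : ℝ) / 2) * Real.exp (2 * τ + τ ^ 2) *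
          (1 + τ) ^ n * (τ * (1 + τ)) ^ n) *
          volume (Metric.ball (0 : EuclideanSpace ℝ (Fin n)) 1) *
          ENNReal.ofReal (|u w| * Real.exp (-‖w‖ ^ 2)) :=
        lintegral_mono fun w => kerf_bound n hτ u w
    _ = ENNReal.ofReal (Real.pi ^ (-(n : ℝ) / 2) * Real.exp (2 * τ + τ ^ 2) * (1 + τ) ^ n *
          (τ * (1 + τ)) ^ n) *
          volume (Metric.ball (0 : EuclideanSpace ℝ (Fin n)) 1) *
          ∫⁻ w, ENNReal.ofReal (|u w| * Real.exp (-‖w‖ ^ 2)) := by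
        rw [lintegral_const_mul' _ _ (ENNReal.mul_ne_top ENNReal.ofReal_ne_top
          measure_ball_lt_top.ne)]
    _ = _ := by
        rw [← ofReal_integral_eq_lintegral_ofReal hu2
          (Filter.Eventually.of_forall fun w => by positivity)]

theorem stmt_18 (n : ℕ) (τ : ℝ) (hτ : 0 < τ) :
    ∃ C : ℝ, 0 < C ∧ ∀ u : EuclideanSpace ℝ (Fin n) → ℝ, Integrable u →
      ∫ x, (madm x) ⁻¹ ^ n * (∫ w in Metric.ball x (τ * madm x), |u w|)
          ∂(gaussMeasure n) ≤
        C * ∫ w, |u w| * Real.exp (-‖w‖ ^ 2) := by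
  classical
  set K : ℝ≥0∞ := ENNReal.ofReal (Real.pi ^ (-(n : ℝ) / 2) * Real.exp (2 * τ + τ ^ 2) *
      (1 + τ) ^ n * (τ * (1 + τ)) ^ n) *
    volume (Metric.ball (0 : EuclideanSpace ℝ (Fin n)) 1) with hKdef
  have hKfin : K ≠ ⊤ := ENNReal.mul_ne_top ENNReal.ofReal_ne_top measure_ball_lt_top.ne
  refine ⟨K.toReal + 1, by positivity, fun u hu => ?_⟩
  have hRHS0 : 0 ≤ ∫ w, |u w| * Real.exp (-‖w‖ ^ 2) :=
    integral_nonneg fun w => by positivity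
  have hFnn : ∀ x : EuclideanSpace ℝ (Fin n),
      0 ≤ (madm x)⁻¹ ^ n * ∫ w in Metric.ball x (τ * madm x), |u w| := fun x =>
    mul_nonneg (pow_nonneg (inv_nonneg.2 (madm_pos x).le) n)
      (integral_nonneg fun w => abs_nonneg _)
  have hfinal : K * ENNReal.ofReal (∫ w, |u w| * Real.exp (-‖w‖ ^ 2)) ≤
      ENNReal.ofReal ((K.toReal + 1) * ∫ w, |u w| * Real.exp (-‖w‖ ^ 2)) := by
    calc K * ENNReal.ofReal (∫ w, |u w| * Real.exp (-‖w‖ ^ 2))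
        = ENNReal.ofReal K.toReal * ENNReal.ofReal (∫ w, |u w| * Real.exp (-‖w‖ ^ 2)) := by
          rw [ENNReal.ofReal_toReal hKfin]
      _ = ENNReal.ofReal (K.toReal * ∫ w, |u w| * Real.exp (-‖w‖ ^ 2)) :=
          (ENNReal.ofReal_mul ENNReal.toReal_nonneg).symm
      _ ≤ _ := ENNReal.ofReal_le_ofReal
          (mul_le_mul_of_nonneg_right (by linarith) hRHS0)
  calc ∫ x, (madm x)⁻¹ ^ n * (∫ w in Metric.ball x (τ * madm x), |u w|) ∂(gaussMeasure n)
      ≤ ‖∫ x, (madm x)⁻¹ ^ n * (∫ w in Metric.ball x (τ * madm x), |u w|)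
          ∂(gaussMeasure n)‖ := by
        rw [Real.norm_eq_abs]; exact le_abs_self _
    _ ≤ (∫⁻ x, ENNReal.ofReal ‖(madm x)⁻¹ ^ n * ∫ w in Metric.ball x (τ * madm x), |u w|‖
          ∂(gaussMeasure n)).toReal := norm_integral_le_lintegral_norm _
    _ = (∫⁻ x, ENNReal.ofReal ((madm x)⁻¹ ^ n * ∫ w in Metric.ball x (τ * madm x), |u w|)
          ∂(gaussMeasure n)).toReal := by
        congr 1
        refine lintegral_congr fun x => ?_
        rw [Real.norm_eq_abs, abs_of_nonneg (hFnn x)]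
    _ ≤ (K.toReal + 1) * ∫ w, |u w| * Real.exp (-‖w‖ ^ 2) :=
        ENNReal.toReal_le_of_le_ofReal (by positivity)
          ((key_lintegral n hτ hu).trans hfinal)
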